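/- Define φ recursively by: φ(∅) = | (the planar binary tree of order 0); for a planar rooted forest f = (t₁, …, t_k), φ(f) = φ(t₁) \ φ(t₂) \ ⋯ \ φ(t_k); and for a planar rooted tree t whose removal of the root yields the forest f, φ(t) = φ(f) / (1), where (1) is the unique planar binary tree of order 1. Then for every n ≥ 0, φ restricts to a bijection from the set of planar rooted forests with n vertices onto the set Y^n of planar binary trees of order n. -/
import Mathlib


/-- Planar binary trees: `leaf` is the trivial tree `|` of order 0, `node l r` has left
subtree `l` and right subtree `r`. -/
inductive PBT : Type
  | leaf : PBT
  | node : PBT → PBT → PBT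
deriving DecidableEq

/-- The order of a planar binary tree: its number of internal vertices. -/
def PBT.order : PBT → ℕ
  | .leaf => 0
  | .node l r => l.order + r.order + 1

/-- `s \ u`: graft `u` onto the rightmost leaf of `s`. -/
def PBT.graftRight : PBT → PBT → PBT
  | .leaf, u => u
  | .node l r, u => .node l (r.graftRight u)

/-- `s / u`: graft `s` onto the leftmost leaf of `u`. -/
def PBT.graftLeft : PBT → PBT → PBT
  | s, .leaf => s
  | s, .node l r => .node (s.graftLeft l) r

/-- Planar rooted trees: a root vertex together with an ordered (finite) list of subtrees. -/
inductive PRT : Type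
  | node : List PRT → PRT

mutual
  /-- Number of vertices of a planar rooted tree. -/
  def PRT.size : PRT → ℕ
    | .node ts => 1 + sizeForest ts
  /-- Number of vertices of a planar rooted forest. -/
  def sizeForest : List PRT → ℕ
    | [] => 0
    | t :: ts => t.size + sizeForest ts
end

mutual
  /-- `φ` on planar rooted trees: removing the root of `t` gives a forest `f`, and
  `φ(t) = φ(f) / (1)` where `(1)` is the unique planar binary tree of order 1. -/
  def phiT : PRT → PBT
    | .node ts => (phiF ts).graftLeft (PBT.node PBT.leaf PBT.leaf)
  /-- `φ` on planar rooted forests: `φ(∅) = |` and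
  `φ(t₁, …, t_k) = φ(t₁) \ φ(t₂) \ ⋯ \ φ(t_k)`. -/
  def phiF : List PRT → PBT
    | [] => PBT.leaf
    | t :: ts => (phiT t).graftRight (phiF ts)
end


def psi : PBT → List PRT
  | .leaf => []
  | .node l r => .node (psi l) :: psi r

theorem phiF_cons (cs ts : List PRT) :
    phiF (PRT.node cs :: ts) = PBT.node (phiF cs) (phiF ts) := by
  show (phiT (PRT.node cs)).graftRight (phiF ts) = _
  show ((phiF cs).graftLeft (PBT.node PBT.leaf PBT.leaf)).graftRight (phiF ts) = _
  simp [PBT.graftLeft, PBT.graftRight]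

theorem phiF_psi : ∀ t : PBT, phiF (psi t) = t
  | .leaf => rfl
  | .node l r => by rw [psi, phiF_cons, phiF_psi l, phiF_psi r]

theorem psi_phiF : ∀ f : List PRT, psi (phiF f) = f
  | [] => rfl
  | (PRT.node cs) :: ts => by
      rw [phiF_cons, psi, psi_phiF cs, psi_phiF ts]

theorem order_phiF : ∀ f : List PRT, (phiF f).order = sizeForest f
  | [] => rfl
  | (PRT.node cs) :: ts => by
      rw [phiF_cons, PBT.order, order_phiF cs, order_phiF ts]
      show _ = (PRT.node cs).size + sizeForest ts
      rw [PRT.size]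
      omega

/-- for every `n ≥ 0`, `φ` restricts to a bijection from the set of planar
rooted forests with `n` vertices onto the set `Y^n` of planar binary trees of order `n`. -/
theorem phiF_bijOn (n : ℕ) :
    Set.BijOn phiF {f : List PRT | sizeForest f = n} {t : PBT | t.order = n} := by
  refine ⟨fun f hf => ?_, fun a _ b _ h => ?_, fun t ht => ?_⟩
  · simpa [order_phiF] using hf
  · have := congrArg psi h
    rwa [psi_phiF, psi_phiF] at this
  · refine ⟨psi t, ?_, phiF_psi t⟩
    have := order_phiF (psi t)
    rw [phiF_psi] at this
    simp only [Set.mem_setOf_eq] at ht ⊢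
    omega
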